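/- Let q be a prime power with gcd(q,3)=1, and let α > β be positive integers. If gcd(2α−β, q+1)=1, then X^α + X^β + 1 has no roots in μ_{q+1}. -/
import Mathlib

/-- If `q` is a prime power coprime to 3 and `α > β > 0`, then under the stated
gcd condition the polynomial `X^α + X^β + 1` has no roots in `μ_{q+1} ⊆ F_{q^2}^*`. -/
theorem stmt_3 (q α β : ℕ) (hq3 : Nat.Coprime q 3)
    (p n : ℕ) (hp : p.Prime) (hn : 0 < n) (hqpn : q = p ^ n)
    (hβ : 0 < β) (hαβ : β < α)
    (hgcd : Nat.gcd (2 * α - β) (q + 1) = 1)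
    (F : Type*) [Field F] [Fintype F] (hF : Fintype.card F = q ^ 2)
    (a : F) (ha : a ≠ 0) (hμ : a ^ (q + 1) = 1) :
    a ^ α + a ^ β + 1 ≠ 0 := by
  -- first, the characteristic of F is p
  obtain ⟨m, hr, hcard⟩ := FiniteField.card F (ringChar F)
  have hrp : ringChar F = p := by
    have hdvd : ringChar F ∣ p := by
      have h1 : ringChar F ∣ Fintype.card F := hcard ▸ dvd_pow_self _ m.pos.ne'
      rw [hF, hqpn, ← pow_mul] at h1
      exact hr.dvd_of_dvd_pow h1
    exact (Nat.prime_dvd_prime_iff_eq hr hp).mp hdvd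
  haveI : CharP F p := hrp ▸ ringChar.charP F
  haveI : Fact p.Prime := ⟨hp⟩
  intro hroot
  -- apply Frobenius x ↦ x^q
  have hq : (a ^ α + a ^ β + 1) ^ q = a ^ (α * q) + a ^ (β * q) + 1 := by
    rw [hqpn, add_pow_char_pow, add_pow_char_pow, one_pow, ← pow_mul, ← pow_mul, ← hqpn]
  rw [hroot, zero_pow (by rw [hqpn]; exact (pow_pos hp.pos n).ne')] at hq
  -- a^q = a⁻¹, so multiply through by a^α
  have hainv : ∀ k : ℕ, a ^ (k * q) * a ^ k = 1 := by
    intro k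
    rw [← pow_add, show k * q + k = (q + 1) * k by ring, pow_mul, hμ, one_pow]
  have hsplit : a ^ α = a ^ (α - β) * a ^ β := by
    rw [← pow_add, Nat.sub_add_cancel hαβ.le]
  have e1 := hainv α
  have e2 := hainv β
  have h2 : a ^ α + a ^ (α - β) + 1 = 0 := by
    linear_combination (-(a ^ α)) * hq - e1 - (a ^ (β * q)) * hsplit - (a ^ (α - β)) * e2
  -- hence a^β = a^(α-β), i.e. a^α = a^(2β)
  have hββ : a ^ (α - β) = a ^ β := by linear_combination h2 - hroot
  have hα2β : a ^ α = a ^ (2 * β) := by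
    rw [hsplit, hββ, two_mul, pow_add]
  -- a^(3β) = 1
  have h3β : a ^ (3 * β) = 1 := by
    have h4 : a ^ (3 * β) = a ^ (2 * β) * a ^ β := by
      rw [← pow_add, show 2 * β + β = 3 * β by ring]
    have h5 : a ^ (2 * β) + a ^ β + 1 = 0 := hα2β ▸ hroot
    linear_combination h4 + (a ^ β - 1) * h5
  -- a^(2α - β) = 1
  have hkey : a ^ (2 * α - β) = 1 := by
    have hβle : β ≤ 2 * α := by omega
    have h6 : a ^ (2 * α - β) * a ^ β = a ^ β := by
      rw [← pow_add, Nat.sub_add_cancel hβle, two_mul, pow_add, hα2β, ← pow_add,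
        show 2 * β + 2 * β = 3 * β + β by ring, pow_add, h3β, one_mul]
    have hbne : a ^ β ≠ 0 := pow_ne_zero _ ha
    field_simp at h6
    exact h6
  -- order of a divides gcd = 1
  have ho1 : orderOf a ∣ 2 * α - β := orderOf_dvd_of_pow_eq_one hkey
  have ho2 : orderOf a ∣ q + 1 := orderOf_dvd_of_pow_eq_one hμ
  have hord : orderOf a = 1 := Nat.eq_one_of_dvd_one (hgcd ▸ Nat.dvd_gcd ho1 ho2)
  have ha1 : a = 1 := orderOf_eq_one_iff.mp hord
  rw [ha1, one_pow, one_pow] at hroot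
  have h30 : (3 : F) = 0 := by linear_combination hroot
  have hp3 : p = 3 := by
    have hd : (p : ℕ) ∣ 3 := (CharP.cast_eq_zero_iff F p 3).mp (by exact_mod_cast h30)
    exact (Nat.prime_dvd_prime_iff_eq hp (by norm_num)).mp hd
  have h3q : (3 : ℕ) ∣ q := by rw [hqpn, hp3]; exact dvd_pow_self 3 hn.ne'
  have : (3 : ℕ) ∣ 1 := hq3 ▸ Nat.dvd_gcd h3q dvd_rfl
  omega
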